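/- The infimum V_0 := inf over Borel measurable α : [0,1] → [-1,1] of −∫_0^1 c(t)·α(t)·(∫_t^1 α(r) dr) dt is attained: there exists an admissible control α* with J(0, α*) = V_0. -/

import Mathlib

open MeasureTheory Set

noncomputable def tn (n : ℕ) : ℝ := 1 - 1 / 2 ^ n
noncomputable def sn (n : ℕ) : ℝ := (tn n + 3 * tn (n + 1)) / 4
noncomputable def c (x : ℝ) : ℝ :=
  ∑' n : ℕ, ((Ico (tn n) (sn n)).indicator (fun _ => (1 : ℝ)) x
    + 6 * (Ico (sn n) (tn (n + 1))).indicator (fun _ => (1 : ℝ)) x)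
noncomputable def J0 (α : ℝ → ℝ) : ℝ :=
  -∫ t in (0 : ℝ)..1, c t * α t * ∫ r in t..1, α r

def Admissible (α : ℝ → ℝ) : Prop := Measurable α ∧ ∀ x, α x ∈ Icc (-1 : ℝ) 1


-- from a.lean

lemma tn_zero : tn 0 = 0 := by simp [tn]

lemma one_sub_tn (n : ℕ) : 1 - tn n = 1 / 2 ^ n := by simp [tn]

lemma one_sub_sn (n : ℕ) : 1 - sn n = 5 / 8 * (1 / 2 ^ n) := by
  have h : (2:ℝ) ^ (n+1) = 2 * 2 ^ n := by ring
  have h2 : (2:ℝ) ^ n ≠ 0 := by positivity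
  have e : (1:ℝ)/2^(n+1) = (1/2^n)/2 := by rw [pow_succ, div_div]
  simp only [sn, tn]; rw [e]; ring

lemma tn_strictMono : StrictMono tn := by
  apply strictMono_nat_of_lt_succ
  intro n
  have h : (2:ℝ) ^ n < 2 ^ (n+1) := by
    apply pow_lt_pow_right₀ <;> norm_num
  have h2 : (0:ℝ) < 2 ^ n := by positivity
  have := one_div_lt_one_div_of_lt h2 h
  simp only [tn]; linarith

lemma tn_lt_sn (n : ℕ) : tn n < sn n := by
  have := tn_strictMono (Nat.lt_succ_self n)
  simp only [sn]; linarith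

lemma sn_lt_tn_succ (n : ℕ) : sn n < tn (n+1) := by
  have := tn_strictMono (Nat.lt_succ_self n)
  simp only [sn]; linarith

lemma tn_succ_sub_sn (n : ℕ) : tn (n+1) - sn n = 1 / 8 * (1 / 2 ^ n) := by
  have h1 := one_sub_sn n
  have h2 := one_sub_tn (n+1)
  have h : (2:ℝ) ^ (n+1) = 2 * 2 ^ n := by ring
  rw [h] at h2
  have h3 : (0:ℝ) < 2 ^ n := by positivity
  field_simp at h1 h2 ⊢
  linarith

lemma tn_nonneg (n : ℕ) : 0 ≤ tn n := by
  rw [← tn_zero]; exact (tn_strictMono.le_iff_le).2 (Nat.zero_le n)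

lemma tn_lt_one (n : ℕ) : tn n < 1 := by
  have : (0:ℝ) < 1 / 2 ^ n := by positivity
  simp only [tn]; linarith

lemma sn_lt_one (n : ℕ) : sn n < 1 := (sn_lt_tn_succ n).trans (tn_lt_one _)

lemma tn_tendsto : Filter.Tendsto tn Filter.atTop (nhds 1) := by
  have : tn = fun n => 1 - (1/2:ℝ) ^ n := by
    funext n; simp [tn, div_pow, one_div]
  rw [this]
  have h := tendsto_pow_atTop_nhds_zero_of_lt_one (by norm_num : (0:ℝ) ≤ 1/2) (by norm_num)
  simpa using (tendsto_const_nhds.sub h)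

-- from b.lean

noncomputable def cterm (n : ℕ) (x : ℝ) : ℝ :=
  (Ico (tn n) (sn n)).indicator (fun _ => (1 : ℝ)) x
    + 6 * (Ico (sn n) (tn (n + 1))).indicator (fun _ => (1 : ℝ)) x




-- the term of the series

lemma cterm_eq_zero {n : ℕ} {x : ℝ} (hx : x ∉ Ico (tn n) (tn (n+1))) : cterm n x = 0 := by
  have h1 : x ∉ Ico (tn n) (sn n) := by
    intro h; exact hx ⟨h.1, h.2.trans (sn_lt_tn_succ n)⟩
  have h2 : x ∉ Ico (sn n) (tn (n+1)) := by
    intro h; exact hx ⟨(tn_lt_sn n).le.trans h.1, h.2⟩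
  simp [cterm, indicator_of_notMem, h1, h2]

lemma cterm_eq_zero_of_ne {n m : ℕ} {x : ℝ} (hx : x ∈ Ico (tn n) (tn (n+1))) (h : m ≠ n) :
    cterm m x = 0 := by
  apply cterm_eq_zero
  rcases lt_or_gt_of_ne h with h | h
  · intro hm
    exact absurd hm.2 (not_lt.2 ((tn_strictMono.le_iff_le.2 h).trans hx.1))
  · intro hm
    exact absurd hx.2 (not_lt.2 ((tn_strictMono.le_iff_le.2 h).trans hm.1))

lemma c_eq_cterm {n : ℕ} {x : ℝ} (hx : x ∈ Ico (tn n) (tn (n+1))) : c x = cterm n x := by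
  have : c x = ∑' m, cterm m x := rfl
  rw [this, tsum_eq_single n (fun m hm => cterm_eq_zero_of_ne hx hm)]

lemma c_eq_one {n : ℕ} {x : ℝ} (hx : x ∈ Ico (tn n) (sn n)) : c x = 1 := by
  have hx' : x ∈ Ico (tn n) (tn (n+1)) := ⟨hx.1, hx.2.trans (sn_lt_tn_succ n)⟩
  rw [c_eq_cterm hx']
  have h2 : x ∉ Ico (sn n) (tn (n+1)) := fun h => absurd hx.2 (not_lt.2 h.1)
  simp [cterm, hx, h2]

lemma c_eq_six {n : ℕ} {x : ℝ} (hx : x ∈ Ico (sn n) (tn (n+1))) : c x = 6 := by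
  have hx' : x ∈ Ico (tn n) (tn (n+1)) := ⟨(tn_lt_sn n).le.trans hx.1, hx.2⟩
  rw [c_eq_cterm hx']
  have h2 : x ∉ Ico (tn n) (sn n) := fun h => absurd hx.1 (not_le.2 h.2)
  simp [cterm, hx, h2]

-- locate
lemma exists_interval {x : ℝ} (hx : x ∈ Ico (0:ℝ) 1) : ∃ n, x ∈ Ico (tn n) (tn (n+1)) := by
  have hex : ∃ n, x < tn n := by
    rcases (tn_tendsto.eventually (eventually_gt_nhds hx.2)).exists with ⟨n, hn⟩
    exact ⟨n, hn⟩
  classical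
  set N := Nat.find hex with hN
  have hNlt : x < tn N := Nat.find_spec hex
  have hNpos : N ≠ 0 := by
    intro h
    rw [h, tn_zero] at hNlt
    exact absurd hx.1 (not_le.2 hNlt)
  obtain ⟨n, hn⟩ := Nat.exists_eq_succ_of_ne_zero hNpos
  rw [hn] at hNlt
  refine ⟨n, ?_, hNlt⟩
  by_contra h
  have hlt : x < tn n := not_le.1 h
  have : Nat.find hex ≤ n := Nat.find_le hlt
  omega

lemma c_eq_zero {x : ℝ} (hx : x ∉ Ico (0:ℝ) 1) : c x = 0 := by
  have : ∀ m, cterm m x = 0 := by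
    intro m
    apply cterm_eq_zero
    intro hm
    apply hx
    constructor
    · calc (0:ℝ) = tn 0 := tn_zero.symm
        _ ≤ tn m := tn_strictMono.le_iff_le.2 (Nat.zero_le m)
        _ ≤ x := hm.1
    · exact hm.2.trans (tn_lt_one _)
  have : c x = ∑' m, cterm m x := rfl
  rw [this]
  simp [cterm_eq_zero, ‹∀ m, cterm m x = 0›]

lemma c_nonneg (x : ℝ) : 0 ≤ c x := by
  by_cases hx : x ∈ Ico (0:ℝ) 1
  · obtain ⟨n, hn⟩ := exists_interval hx
    by_cases h : x < sn n
    · rw [c_eq_one ⟨hn.1, h⟩]; norm_num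
    · rw [c_eq_six ⟨not_lt.1 h, hn.2⟩]; norm_num
  · rw [c_eq_zero hx]

lemma c_le_six (x : ℝ) : c x ≤ 6 := by
  by_cases hx : x ∈ Ico (0:ℝ) 1
  · obtain ⟨n, hn⟩ := exists_interval hx
    by_cases h : x < sn n
    · rw [c_eq_one ⟨hn.1, h⟩]; norm_num
    · rw [c_eq_six ⟨not_lt.1 h, hn.2⟩]
  · rw [c_eq_zero hx]; norm_num

lemma c_eq_explicit : c = fun x => (⋃ n, Ico (tn n) (sn n)).indicator (fun _ => (1:ℝ)) x
    + 6 * (⋃ n, Ico (sn n) (tn (n+1))).indicator (fun _ => (1:ℝ)) x := by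
  funext x
  by_cases hx : x ∈ Ico (0:ℝ) 1
  · obtain ⟨n, hn⟩ := exists_interval hx
    by_cases h : x < sn n
    · have h1 : x ∈ ⋃ n, Ico (tn n) (sn n) := mem_iUnion.2 ⟨n, hn.1, h⟩
      have h2 : x ∉ ⋃ n, Ico (sn n) (tn (n+1)) := by
        rw [mem_iUnion]
        rintro ⟨m, hm⟩
        have : x ∈ Ico (tn m) (tn (m+1)) := ⟨(tn_lt_sn m).le.trans hm.1, hm.2⟩
        have : cterm m x ≠ 0 := by
          have h2' : x ∉ Ico (tn m) (sn m) := fun hh => absurd hm.1 (not_le.2 hh.2)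
          simp [cterm, hm, h2']
        have hmn : m = n := by
          by_contra hne
          exact this (cterm_eq_zero_of_ne hn hne)
        subst hmn
        exact absurd h (not_lt.2 hm.1)
      simp [c_eq_one ⟨hn.1, h⟩, h1, h2]
    · have hx6 : x ∈ Ico (sn n) (tn (n+1)) := ⟨not_lt.1 h, hn.2⟩
      have h1 : x ∈ ⋃ n, Ico (sn n) (tn (n+1)) := mem_iUnion.2 ⟨n, hx6⟩
      have h2 : x ∉ ⋃ n, Ico (tn n) (sn n) := by
        rw [mem_iUnion]
        rintro ⟨m, hm⟩
        have hmem : x ∈ Ico (tn m) (tn (m+1)) := ⟨hm.1, hm.2.trans (sn_lt_tn_succ m)⟩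
        have : cterm m x ≠ 0 := by
          have h2' : x ∉ Ico (sn m) (tn (m+1)) := fun hh => absurd hm.2 (not_lt.2 hh.1)
          simp [cterm, hm, h2']
        have hmn : m = n := by
          by_contra hne
          exact this (cterm_eq_zero_of_ne hn hne)
        subst hmn
        exact absurd hm.2 (not_lt.2 hx6.1)
      simp [c_eq_six hx6, h1, h2]
  · have h1 : x ∉ ⋃ n, Ico (tn n) (sn n) := by
      rw [mem_iUnion]
      rintro ⟨m, hm⟩
      exact hx ⟨(le_trans (by rw [← tn_zero]; exact tn_strictMono.le_iff_le.2 (Nat.zero_le m)) hm.1),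
        hm.2.trans (sn_lt_one m)⟩
    have h2 : x ∉ ⋃ n, Ico (sn n) (tn (n+1)) := by
      rw [mem_iUnion]
      rintro ⟨m, hm⟩
      refine hx ⟨?_, hm.2.trans (tn_lt_one _)⟩
      have h0 : (0:ℝ) = tn 0 := tn_zero.symm
      have := tn_strictMono.le_iff_le.2 (Nat.zero_le m)
      have := tn_lt_sn m
      linarith [hm.1]
    simp [c_eq_zero hx, h1, h2]

lemma c_measurable : Measurable c := by
  rw [c_eq_explicit]
  apply Measurable.add
  · exact (measurable_indicator_const_iff 1).2 (MeasurableSet.iUnion (fun n => measurableSet_Ico))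
  · apply Measurable.const_mul
    exact (measurable_indicator_const_iff 1).2 (MeasurableSet.iUnion (fun n => measurableSet_Ico))

-- from cfub.lean

lemma intOn {α : ℝ → ℝ} (hm : Measurable α) (hb : ∀ x, |α x| ≤ 1) (a b : ℝ) :
    IntegrableOn α (Ioc a b) volume := by
  refine Integrable.mono' (g := fun _ => (1:ℝ)) ?_ hm.aestronglyMeasurable
    (ae_of_all _ fun x => by simpa using hb x)
  exact integrableOn_const measure_Ioc_lt_top.ne

lemma intInt {α : ℝ → ℝ} (hm : Measurable α) (hb : ∀ x, |α x| ≤ 1) (a b : ℝ) :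
    IntervalIntegrable α volume a b := by
  rw [intervalIntegrable_iff]
  refine Integrable.mono' (g := fun _ => (1:ℝ)) ?_ hm.aestronglyMeasurable
    (ae_of_all _ fun x => by simpa using hb x)
  exact integrableOn_const measure_Ioc_lt_top.ne

lemma square_identity {α : ℝ → ℝ} (hm : Measurable α) (hb : ∀ x, |α x| ≤ 1) {a b : ℝ}
    (hab : a ≤ b) :
    ∫ t in Ioc a b, α t * ∫ r in Ioc t b, α r = (∫ t in Ioc a b, α t) ^ 2 / 2 := by
  set s := Ioc a b with hs
  set T := ∫ t in Ioc a b, α t with hT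
  haveI : IsFiniteMeasure (volume.restrict s) :=
    ⟨by rw [Measure.restrict_apply_univ]; exact measure_Ioc_lt_top⟩
  set g : ℝ → ℝ → ℝ := fun t r => α t * α r * ({p : ℝ × ℝ | p.1 < p.2}.indicator
    (fun _ => (1:ℝ)) (t, r)) with hg
  have hgmeas : Measurable (Function.uncurry g) := by
    apply Measurable.mul
    · exact (hm.comp measurable_fst).mul (hm.comp measurable_snd)
    · exact (measurable_indicator_const_iff 1).2 (measurableSet_lt measurable_fst measurable_snd)
  have hgint : Integrable (Function.uncurry g) ((volume.restrict s).prod (volume.restrict s)) := by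
    refine Integrable.mono' (g := fun _ => (1:ℝ)) (integrable_const 1)
      hgmeas.aestronglyMeasurable (ae_of_all _ ?_)
    rintro ⟨t, r⟩
    show ‖α t * α r * _‖ ≤ 1
    rw [Real.norm_eq_abs, abs_mul, abs_mul]
    have h1 := hb t
    have h2 := hb r
    have h3 : |({p : ℝ × ℝ | p.1 < p.2}.indicator (fun _ => (1:ℝ)) (t, r))| ≤ 1 := by
      simp only [Set.indicator_apply]
      split <;> simp
    calc |α t| * |α r| * |({p : ℝ × ℝ | p.1 < p.2}.indicator (fun _ => (1:ℝ)) (t, r))|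
        ≤ 1 * 1 * 1 := by
          apply mul_le_mul (mul_le_mul h1 h2 (abs_nonneg _) zero_le_one) h3 (abs_nonneg _)
          norm_num
      _ = 1 := by norm_num
  have gIoi : ∀ t r, g t r = (Ioi t).indicator (fun r => α t * α r) r := by
    intro t r
    simp only [hg, Set.indicator_apply, mem_Ioi, mem_setOf_eq]
    by_cases h : t < r <;> simp [h]
  have gIio : ∀ t r, g t r = (Iio r).indicator (fun t => α t * α r) t := by
    intro t r
    simp only [hg, Set.indicator_apply, mem_Iio, mem_setOf_eq]
    by_cases h : t < r <;> simp [h]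
  have inner1 : ∀ t ∈ s, α t * (∫ r in Ioc t b, α r) = ∫ r in s, g t r := by
    intro t ht
    simp_rw [gIoi t]
    rw [setIntegral_indicator measurableSet_Ioi]
    have hst : s ∩ Ioi t = Ioc t b := by
      rw [hs, Set.Ioc_inter_Ioi, sup_eq_right.2 ht.1.le]
    rw [hst, integral_const_mul]
  have inner2 : ∀ r ∈ s, (∫ t in s, g t r) = α r * (T - ∫ u in Ioc r b, α u) := by
    intro r hr
    simp_rw [fun t => gIio t r]
    rw [setIntegral_indicator measurableSet_Iio]
    have hsr : s ∩ Iio r = Ioo a r := by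
      rw [hs]
      ext x
      simp only [mem_inter_iff, mem_Ioc, mem_Iio, mem_Ioo]
      exact ⟨fun ⟨⟨h1, _⟩, h3⟩ => ⟨h1, h3⟩, fun ⟨h1, h3⟩ => ⟨⟨h1, h3.le.trans hr.2⟩, h3⟩⟩
    rw [hsr]
    have hsplit : T = (∫ t in Ioc a r, α t) + ∫ t in Ioc r b, α t := by
      rw [hT]
      rw [show (Ioc a b) = Ioc a r ∪ Ioc r b from (Set.Ioc_union_Ioc_eq_Ioc hr.1.le hr.2).symm,
        setIntegral_union (Set.Ioc_disjoint_Ioc_of_le le_rfl) measurableSet_Ioc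
          (intOn hm hb a r) (intOn hm hb r b)]
    have : ∫ t in Ioo a r, α t * α r = (∫ t in Ioc a r, α t) * α r := by
      rw [← integral_Ioc_eq_integral_Ioo, ← integral_mul_const]
    rw [this, hsplit]
    ring
  -- Fm : continuous version of r ↦ ∫ Ioc r b
  set K : ℝ → ℝ := fun r => ∫ x in b..r, α x with hK
  have hKcont : Continuous K := intervalIntegral.continuous_primitive (intInt hm hb) b
  have hFm : ∀ r ∈ s, (∫ u in Ioc r b, α u) = -K r := by
    intro r hr
    rw [hK, ← intervalIntegral.integral_symm, intervalIntegral.integral_of_le hr.2]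
  have hintK : Integrable (fun r => α r * -K r) (volume.restrict s) := by
    have hC : ∃ C, ∀ r ∈ s, ‖α r * -K r‖ ≤ C := by
      obtain ⟨C, hC⟩ := (isCompact_Icc (a := a) (b := b)).exists_bound_of_continuousOn
        hKcont.continuousOn
      refine ⟨1 * (|C| + 1), fun r hr => ?_⟩
      rw [norm_mul, norm_neg]
      apply mul_le_mul (by simpa using hb r) ?_ (norm_nonneg _) zero_le_one
      have := hC r (Ioc_subset_Icc_self hr)
      have : ‖K r‖ ≤ C := this
      have habs : C ≤ |C| := le_abs_self C
      linarith
    obtain ⟨C, hC⟩ := hC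
    refine Integrable.mono' (g := fun _ => C) (integrable_const C)
      ((hm.mul (hKcont.measurable.neg)).aestronglyMeasurable) ?_
    rw [ae_restrict_iff' measurableSet_Ioc]
    exact ae_of_all _ hC
  have swap : ∫ t in s, α t * (∫ r in Ioc t b, α r) = ∫ r in s, α r * (T - ∫ u in Ioc r b, α u) := by
    calc ∫ t in s, α t * (∫ r in Ioc t b, α r)
        = ∫ t in s, ∫ r in s, g t r := setIntegral_congr_fun measurableSet_Ioc inner1
      _ = ∫ r in s, ∫ t in s, g t r := integral_integral_swap hgint
      _ = _ := setIntegral_congr_fun measurableSet_Ioc inner2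
  have step2 : ∫ r in s, α r * (T - ∫ u in Ioc r b, α u)
      = T * T - ∫ t in s, α t * (∫ r in Ioc t b, α r) := by
    have e1 : ∫ r in s, α r * (T - ∫ u in Ioc r b, α u)
        = ∫ r in s, (T * α r - α r * -K r) := by
      refine setIntegral_congr_fun measurableSet_Ioc (fun r hr => ?_)
      rw [hFm r hr]; ring
    have e2 : ∫ t in s, α t * (∫ r in Ioc t b, α r) = ∫ r in s, α r * -K r :=
      setIntegral_congr_fun measurableSet_Ioc (fun r hr => by rw [hFm r hr])
    rw [e1, e2, integral_sub ((intOn hm hb a b).const_mul T) hintK, integral_const_mul, ← hT]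
  have := swap.trans step2
  linarith [this]

-- from pieceA.lean

lemma int_mul_tail {α : ℝ → ℝ} (hm : Measurable α) (hb : ∀ x, |α x| ≤ 1) (a b : ℝ) :
    Integrable (fun r => α r * ∫ u in Ioc r b, α u) (volume.restrict (Ioc a b)) := by
  set K : ℝ → ℝ := fun r => ∫ x in b..r, α x with hK
  have hKcont : Continuous K := intervalIntegral.continuous_primitive (intInt hm hb) b
  have hFm : ∀ r ∈ Ioc a b, (∫ u in Ioc r b, α u) = -K r := by
    intro r hr
    rw [hK, ← intervalIntegral.integral_symm, intervalIntegral.integral_of_le hr.2]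
  have hintK : Integrable (fun r => α r * -K r) (volume.restrict (Ioc a b)) := by
    obtain ⟨C, hC⟩ := (isCompact_Icc (a := a) (b := b)).exists_bound_of_continuousOn
      hKcont.continuousOn
    refine Integrable.mono' (g := fun _ => 1 * (|C| + 1)) (integrable_const _)
      ((hm.mul hKcont.measurable.neg).aestronglyMeasurable) ?_
    rw [ae_restrict_iff' measurableSet_Ioc]
    refine ae_of_all _ (fun r hr => ?_)
    rw [norm_mul, norm_neg]
    apply mul_le_mul (by simpa using hb r) ?_ (norm_nonneg _) zero_le_one
    have h1 : ‖K r‖ ≤ C := hC r (Ioc_subset_Icc_self hr)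
    have habs : C ≤ |C| := le_abs_self C
    linarith
  refine hintK.congr ?_
  have : ∀ᵐ r ∂(volume.restrict (Ioc a b)), r ∈ Ioc a b := ae_restrict_mem measurableSet_Ioc
  filter_upwards [this] with r hr
  rw [hFm r hr]

lemma pieceA {α : ℝ → ℝ} (hm : Measurable α) (hb : ∀ x, |α x| ≤ 1) {a b : ℝ}
    (hab : a ≤ b) (hb1 : b ≤ 1) :
    ∫ t in Ioc a b, α t * ∫ r in t..1, α r
      = ((∫ r in a..1, α r) ^ 2 - (∫ r in b..1, α r) ^ 2) / 2 := by
  set Xa := ∫ r in a..1, α r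
  set Xb := ∫ r in b..1, α r
  have hT : ∫ t in Ioc a b, α t = Xa - Xb := by
    rw [← intervalIntegral.integral_of_le hab]
    have := intervalIntegral.integral_add_adjacent_intervals (intInt hm hb a b) (intInt hm hb b 1)
    linarith [this]
  have step : ∫ t in Ioc a b, α t * ∫ r in t..1, α r
      = (∫ t in Ioc a b, α t * ∫ r in Ioc t b, α r) + ∫ t in Ioc a b, α t * Xb := by
    rw [← integral_add (int_mul_tail hm hb a b) ((intOn hm hb a b).mul_const Xb)]
    refine setIntegral_congr_fun measurableSet_Ioc (fun t ht => ?_)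
    have hsplit := intervalIntegral.integral_add_adjacent_intervals
      (intInt hm hb t b) (intInt hm hb b 1)
    have : ∫ r in t..1, α r = (∫ r in Ioc t b, α r) + Xb := by
      rw [← intervalIntegral.integral_of_le ht.2]
      linarith [hsplit]
    rw [this]; ring
  rw [step, square_identity hm hb hab, integral_mul_const, hT]
  ring

-- from series.lean

lemma summable_geom_like (C : ℝ) : Summable (fun n : ℕ => C * (1/4)^n) :=
  (summable_geometric_of_lt_one (by norm_num) (by norm_num)).mul_left C

lemma summable_of_abs_le_geom {f : ℕ → ℝ} (C : ℝ) (h : ∀ n, |f n| ≤ C * (1/4)^n) :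
    Summable f :=
  Summable.of_abs (Summable.of_nonneg_of_le (fun n => abs_nonneg _) h (summable_geom_like C))

lemma tsum_quarter : ∑' n : ℕ, ((1:ℝ)/4)^n = 4/3 := by
  rw [tsum_geometric_of_lt_one (by norm_num) (by norm_num)]
  norm_num

lemma series_main (A B : ℕ → ℝ) (hA : ∀ n, |A n| ≤ 1/2^n)
    (hB : ∀ n, |B n| ≤ 1/2^n) (hBA : ∀ n, |B n - A (n+1)| ≤ 1/8 * (1/2^n)) :
    Summable (fun n => (A n^2 - B n^2)/2 + 6*((B n^2 - A (n+1)^2)/2)) ∧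
    ∑' n, ((A n^2 - B n^2)/2 + 6*((B n^2 - A (n+1)^2)/2)) ≤ 31/32 := by
  have half_pow : ∀ n : ℕ, (1:ℝ)/2^n = (1/2)^n := fun n => by rw [div_pow]; norm_num
  have half_sq : ∀ n : ℕ, ((1:ℝ)/2)^n * (1/2)^n = (1/4)^n := fun n => by
    rw [← mul_pow]; norm_num
  set u := fun n => (A n^2 - B n^2)/2 + 6*((B n^2 - A (n+1)^2)/2) with hu
  set v := fun n => (5/2)*(B n^2 - A (n+1)^2) with hv
  set g := fun n => A n^2/2 with hg
  set w := fun n => g n - g (n+1) with hw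
  have sq_bound : ∀ n, (A n)^2 ≤ (1/4)^n := by
    intro n
    have h1 := hA n
    rw [half_pow n] at h1
    nlinarith [abs_nonneg (A n), sq_abs (A n), half_sq n]
  have sqB_bound : ∀ n, (B n)^2 ≤ (1/4)^n := by
    intro n
    have h1 := hB n
    rw [half_pow n] at h1
    nlinarith [abs_nonneg (B n), sq_abs (B n), half_sq n]
  have pow_succ_le : ∀ n : ℕ, ((1:ℝ)/4)^(n+1) ≤ (1/4)^n := fun n => by
    apply pow_le_pow_of_le_one <;> norm_num
  have hq4 : ∀ n : ℕ, (0:ℝ) ≤ (1/4)^n := fun n => by positivity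
  have hsv : Summable v := by
    apply summable_of_abs_le_geom 5
    intro n
    have h1 := sq_bound (n+1); have h2 := sqB_bound n; have h3 := pow_succ_le n
    have h4 := hq4 (n+1); have h5 := hq4 n
    rw [hv]
    rw [abs_le]
    constructor <;> nlinarith [sq_nonneg (A (n+1)), sq_nonneg (B n)]
  have hsw : Summable w := by
    apply summable_of_abs_le_geom 1
    intro n
    have h1 := sq_bound (n+1); have h2 := sq_bound n; have h3 := pow_succ_le n
    have h4 := hq4 (n+1); have h5 := hq4 n
    rw [hw, hg, abs_le]
    constructor <;> nlinarith [sq_nonneg (A (n+1)), sq_nonneg (A n)]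
  have hwsum : ∑' n, w n = g 0 := by
    have htend : Filter.Tendsto (fun N => ∑ i ∈ Finset.range N, w i) Filter.atTop (nhds (g 0)) := by
      have heq : ∀ N, ∑ i ∈ Finset.range N, w i = g 0 - g N := by
        intro N
        rw [hw]
        exact Finset.sum_range_sub' g N
      simp_rw [heq]
      have hgz : Filter.Tendsto g Filter.atTop (nhds 0) := by
        have h0 : Filter.Tendsto (fun n : ℕ => ((1:ℝ)/4)^n / 2) Filter.atTop (nhds 0) := by
          simpa using (tendsto_pow_atTop_nhds_zero_of_lt_one
            (by norm_num : (0:ℝ) ≤ 1/4) (by norm_num)).div_const 2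
        apply squeeze_zero (fun n => by positivity) (fun n => ?_) h0
        have := sq_bound n
        rw [hg]
        linarith
      simpa using tendsto_const_nhds.sub hgz
    exact ((hsw.hasSum_iff_tendsto_nat).2 htend).tsum_eq
  have huvw : u = fun n => v n + w n := by
    funext n; rw [hu, hv, hw, hg]; ring
  have hsu : Summable u := by rw [huvw]; exact hsv.add hsw
  refine ⟨hsu, ?_⟩
  have htsum : ∑' n, u n = (∑' n, v n) + g 0 := by
    rw [huvw, Summable.tsum_add hsv hsw, hwsum]
  -- bound on v
  have hvle : ∀ n, v n ≤ 45/128 * (1/4)^n := by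
    intro n
    have h1 := hA (n+1)
    have h2 := hBA n
    rw [half_pow] at h1
    have hBabs : |B n| ≤ |A (n+1)| + 1/8 * (1/2^n) := by
      calc |B n| = |(B n - A (n+1)) + A (n+1)| := by ring_nf
        _ ≤ |B n - A (n+1)| + |A (n+1)| := abs_add_le _ _
        _ ≤ 1/8 * (1/2^n) + |A (n+1)| := by linarith
        _ = _ := by ring
    have hBsq : (B n)^2 ≤ (|A (n+1)| + 1/8 * (1/2^n))^2 := by
      have h0 : (0:ℝ) ≤ |A (n+1)| + 1/8 * (1/2^n) := by positivity
      nlinarith [abs_nonneg (B n), sq_abs (B n)]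
    rw [hv]
    have hAp : |A (n+1)| ≤ (1/2)^n / 2 := by
      have := h1
      calc |A (n+1)| ≤ (1/2)^(n+1) := h1
        _ = (1/2)^n / 2 := by rw [pow_succ]; ring
    have hsq : ((1:ℝ)/2)^n * (1/2)^n = (1/4)^n := half_sq n
    have hpos : (0:ℝ) ≤ (1/2)^n := by positivity
    have hp2 : (1:ℝ)/2^n = (1/2)^n := half_pow n
    rw [hp2] at hBsq
    nlinarith [sq_abs (A (n+1)), abs_nonneg (A (n+1))]
  have hvsum_le : ∑' n, v n ≤ 15/32 := by
    have h1 : ∑' n, v n ≤ ∑' n, 45/128 * ((1:ℝ)/4)^n :=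
      Summable.tsum_le_tsum hvle hsv (summable_geom_like _)
    have h2 : ∑' n, 45/128 * ((1:ℝ)/4)^n = 15/32 := by
      rw [tsum_mul_left, tsum_quarter]; norm_num
    linarith
  have hg0 : g 0 ≤ 1/2 := by
    have := sq_bound 0
    rw [hg]
    simp at this ⊢
    nlinarith [sq_abs (A 0), abs_nonneg (A 0)]
  linarith [htsum, hvsum_le, hg0]

-- from decomp.lean

lemma iUnion_Ioc_tn : ⋃ n, Ioc (tn n) (tn (n+1)) = Ioo (0:ℝ) 1 := by
  ext x
  simp only [mem_iUnion, mem_Ioc, mem_Ioo]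
  constructor
  · rintro ⟨n, h1, h2⟩
    exact ⟨lt_of_le_of_lt (tn_nonneg n) h1, lt_of_le_of_lt h2 (tn_lt_one _)⟩
  · rintro ⟨h1, h2⟩
    have hex : ∃ n, x ≤ tn n := by
      rcases (tn_tendsto.eventually (eventually_gt_nhds h2)).exists with ⟨n, hn⟩
      exact ⟨n, hn.le⟩
    classical
    set N := Nat.find hex with hN
    have hNle : x ≤ tn N := Nat.find_spec hex
    have hNpos : N ≠ 0 := by
      intro h
      rw [h, tn_zero] at hNle
      exact absurd h1 (not_lt.2 hNle)
    obtain ⟨n, hn⟩ := Nat.exists_eq_succ_of_ne_zero hNpos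
    rw [hn] at hNle
    refine ⟨n, ?_, hNle⟩
    by_contra h
    have hle : x ≤ tn n := not_lt.1 h
    have : Nat.find hex ≤ n := Nat.find_le hle
    omega

section
variable {α : ℝ → ℝ}

lemma X_cont (hm : Measurable α) (hb : ∀ x, |α x| ≤ 1) : Continuous (fun t => ∫ r in t..1, α r) := by
  have h : Continuous (fun t => ∫ r in (1:ℝ)..t, α r) :=
    intervalIntegral.continuous_primitive (intInt hm hb) 1
  have : (fun t => ∫ r in t..1, α r) = fun t => -(∫ r in (1:ℝ)..t, α r) := by
    funext t; rw [← intervalIntegral.integral_symm]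
  rw [this]
  exact h.neg

lemma X_bound (hm : Measurable α) (hb : ∀ x, |α x| ≤ 1) {t : ℝ} (ht : t ≤ 1) : |∫ r in t..1, α r| ≤ 1 - t := by
  have := intervalIntegral.norm_integral_le_of_norm_le_const
    (C := 1) (f := α) (a := t) (b := 1) (fun x _ => by simpa using hb x)
  rw [Real.norm_eq_abs] at this
  calc |∫ r in t..1, α r| ≤ 1 * |1 - t| := this
    _ = 1 - t := by rw [one_mul, abs_of_nonneg (by linarith)]

lemma X_diff (hm : Measurable α) (hb : ∀ x, |α x| ≤ 1) {a b : ℝ} (hab : a ≤ b) :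
    (∫ r in a..1, α r) - (∫ r in b..1, α r) = ∫ r in a..b, α r := by
  have := intervalIntegral.integral_add_adjacent_intervals (intInt hm hb a b) (intInt hm hb b 1)
  linarith

lemma X_diff_bound (hm : Measurable α) (hb : ∀ x, |α x| ≤ 1) {a b : ℝ} (hab : a ≤ b) :
    |(∫ r in a..1, α r) - (∫ r in b..1, α r)| ≤ b - a := by
  rw [X_diff hm hb hab]
  have := intervalIntegral.norm_integral_le_of_norm_le_const
    (C := 1) (f := α) (a := a) (b := b) (fun x _ => by simpa using hb x)
  rw [Real.norm_eq_abs] at this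
  calc |∫ r in a..b, α r| ≤ 1 * |b - a| := this
    _ = b - a := by rw [one_mul, abs_of_nonneg (by linarith)]

lemma G_integrableOn (hm : Measurable α) (hb : ∀ x, |α x| ≤ 1) : IntegrableOn (fun t => c t * α t * ∫ r in t..1, α r) (Ioo 0 1) volume := by
  refine Integrable.mono' (g := fun _ => (6:ℝ)) ?_ ?_ ?_
  · exact integrableOn_const measure_Ioo_lt_top.ne
  · exact ((c_measurable.mul hm).mul (X_cont hm hb).measurable).aestronglyMeasurable
  · rw [ae_restrict_iff' measurableSet_Ioo]
    refine ae_of_all _ (fun t ht => ?_)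
    rw [Real.norm_eq_abs, abs_mul, abs_mul]
    have h1 : |c t| ≤ 6 := by
      rw [abs_of_nonneg (c_nonneg t)]
      exact c_le_six t
    have h2 := hb t
    have h3 : |∫ r in t..1, α r| ≤ 1 := by
      have := X_bound (α := α) hm hb (le_of_lt ht.2)
      linarith [ht.1]
    calc |c t| * |α t| * |∫ r in t..1, α r| ≤ 6 * 1 * 1 := by
          apply mul_le_mul (mul_le_mul h1 h2 (abs_nonneg _) (by norm_num)) h3 (abs_nonneg _)
          norm_num
      _ = 6 := by norm_num

lemma main_decomp (hm : Measurable α) (hb : ∀ x, |α x| ≤ 1) :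
    ∫ t in (0:ℝ)..1, c t * α t * ∫ r in t..1, α r
      = ∑' n : ℕ, (((∫ r in (tn n)..1, α r) ^ 2 - (∫ r in (sn n)..1, α r) ^ 2) / 2
          + 6 * (((∫ r in (sn n)..1, α r) ^ 2 - (∫ r in (tn (n+1))..1, α r) ^ 2) / 2)) := by
  set G := fun t => c t * α t * ∫ r in t..1, α r with hG
  have hGint := G_integrableOn hm hb
  have step1 : ∫ t in (0:ℝ)..1, G t = ∫ t in Ioo (0:ℝ) 1, G t := by
    rw [intervalIntegral.integral_of_le zero_le_one, integral_Ioc_eq_integral_Ioo]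
  have hdisj : Pairwise (Function.onFun Disjoint (fun n => Ioc (tn n) (tn (n+1)))) := by
    intro i j hij
    rw [Function.onFun, Set.Ioc_disjoint_Ioc]
    rcases lt_or_gt_of_ne hij with h | h
    · exact le_trans (min_le_left _ _) (le_max_of_le_right (tn_strictMono.le_iff_le.2 h))
    · exact le_trans (min_le_right _ _) (le_max_of_le_left (tn_strictMono.le_iff_le.2 h))
  have step2 : ∫ t in Ioo (0:ℝ) 1, G t = ∑' n : ℕ, ∫ t in Ioc (tn n) (tn (n+1)), G t := by
    rw [← iUnion_Ioc_tn]
    exact integral_iUnion (fun n => measurableSet_Ioc) hdisj (iUnion_Ioc_tn ▸ hGint)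
  have piece_sub : ∀ n, Ioc (tn n) (tn (n+1)) ⊆ Ioo (0:ℝ) 1 := by
    intro n x hx
    exact ⟨lt_of_le_of_lt (tn_nonneg n) hx.1, lt_of_le_of_lt hx.2 (tn_lt_one _)⟩
  have step3 : ∀ n : ℕ, ∫ t in Ioc (tn n) (tn (n+1)), G t
      = ((∫ r in (tn n)..1, α r) ^ 2 - (∫ r in (sn n)..1, α r) ^ 2) / 2
        + 6 * (((∫ r in (sn n)..1, α r) ^ 2 - (∫ r in (tn (n+1))..1, α r) ^ 2) / 2) := by
    intro n
    have hsub1 : Ioc (tn n) (sn n) ⊆ Ioo (0:ℝ) 1 := fun x hx =>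
      ⟨lt_of_le_of_lt (tn_nonneg n) hx.1, lt_of_le_of_lt hx.2 (sn_lt_one _)⟩
    have hsub2 : Ioc (sn n) (tn (n+1)) ⊆ Ioo (0:ℝ) 1 := fun x hx =>
      ⟨lt_of_le_of_lt (tn_nonneg n) ((tn_lt_sn n).trans hx.1), lt_of_le_of_lt hx.2 (tn_lt_one _)⟩
    have hsplit : ∫ t in Ioc (tn n) (tn (n+1)), G t
        = (∫ t in Ioc (tn n) (sn n), G t) + ∫ t in Ioc (sn n) (tn (n+1)), G t := by
      rw [show Ioc (tn n) (tn (n+1)) = Ioc (tn n) (sn n) ∪ Ioc (sn n) (tn (n+1)) from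
        (Set.Ioc_union_Ioc_eq_Ioc (tn_lt_sn n).le (sn_lt_tn_succ n).le).symm,
        setIntegral_union (Set.Ioc_disjoint_Ioc_of_le le_rfl) measurableSet_Ioc
          (hGint.mono_set hsub1) (hGint.mono_set hsub2)]
    have part1 : ∫ t in Ioc (tn n) (sn n), G t
        = ((∫ r in (tn n)..1, α r) ^ 2 - (∫ r in (sn n)..1, α r) ^ 2) / 2 := by
      rw [integral_Ioc_eq_integral_Ioo]
      have : ∫ t in Ioo (tn n) (sn n), G t = ∫ t in Ioo (tn n) (sn n), α t * ∫ r in t..1, α r := by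
        refine setIntegral_congr_fun measurableSet_Ioo (fun t ht => ?_)
        rw [hG]
        simp only
        rw [c_eq_one ⟨ht.1.le, ht.2⟩, one_mul]
      rw [this, ← integral_Ioc_eq_integral_Ioo, pieceA hm hb (tn_lt_sn n).le (sn_lt_one n).le]
    have part2 : ∫ t in Ioc (sn n) (tn (n+1)), G t
        = 6 * (((∫ r in (sn n)..1, α r) ^ 2 - (∫ r in (tn (n+1))..1, α r) ^ 2) / 2) := by
      rw [integral_Ioc_eq_integral_Ioo]
      have : ∫ t in Ioo (sn n) (tn (n+1)), G t
          = ∫ t in Ioo (sn n) (tn (n+1)), 6 * (α t * ∫ r in t..1, α r) := by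
        refine setIntegral_congr_fun measurableSet_Ioo (fun t ht => ?_)
        rw [hG]
        simp only
        rw [c_eq_six ⟨ht.1.le, ht.2⟩]
        ring
      rw [this, integral_const_mul, ← integral_Ioc_eq_integral_Ioo,
        pieceA hm hb (sn_lt_tn_succ n).le (tn_lt_one (n+1)).le]
    rw [hsplit, part1, part2]
  rw [step1, step2]
  exact tsum_congr step3

end

-- from final.lean

lemma abs_le_one_of_admissible {α : ℝ → ℝ} (h : Admissible α) : ∀ x, |α x| ≤ 1 := by
  intro x
  obtain ⟨h1, h2⟩ := (h.2 x)
  exact abs_le.2 ⟨h1, h2⟩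

lemma J0_ge {α : ℝ → ℝ} (h : Admissible α) : -(31/32) ≤ J0 α := by
  have hm := h.1
  have hb := abs_le_one_of_admissible h
  set A : ℕ → ℝ := fun n => ∫ r in (tn n)..1, α r with hA
  set B : ℕ → ℝ := fun n => ∫ r in (sn n)..1, α r with hB
  have hAb : ∀ n, |A n| ≤ 1/2^n := fun n => by
    rw [hA, ← one_sub_tn n]; exact X_bound hm hb (tn_lt_one n).le
  have hBb : ∀ n, |B n| ≤ 1/2^n := fun n => by
    have h1 := X_bound hm hb (t := sn n) (sn_lt_one n).le
    rw [one_sub_sn n] at h1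
    have : (5:ℝ)/8 * (1/2^n) ≤ 1/2^n := by
      have : (0:ℝ) ≤ 1/2^n := by positivity
      linarith
    rw [hB]; exact le_trans h1 this
  have hBAb : ∀ n, |B n - A (n+1)| ≤ 1/8 * (1/2^n) := fun n => by
    have := X_diff_bound hm hb (a := sn n) (b := tn (n+1)) (sn_lt_tn_succ n).le
    rw [tn_succ_sub_sn n] at this
    exact this
  obtain ⟨hsum, hle⟩ := series_main A B hAb hBb hBAb
  have := main_decomp hm hb
  rw [J0, this]
  linarith [hle]

lemma J0_one : J0 (fun _ => (1:ℝ)) = -(31/32) := by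
  have hm : Measurable (fun _ : ℝ => (1:ℝ)) := measurable_const
  have hb : ∀ x : ℝ, |(1:ℝ)| ≤ 1 := fun x => by norm_num
  have hXone : ∀ t : ℝ, (∫ r in t..1, (1:ℝ)) = 1 - t := fun t => by simp
  rw [J0, main_decomp hm hb]
  have hterm : ∀ n : ℕ, (((∫ r in (tn n)..1, (1:ℝ)) ^ 2 - (∫ r in (sn n)..1, (1:ℝ)) ^ 2) / 2
      + 6 * (((∫ r in (sn n)..1, (1:ℝ)) ^ 2 - (∫ r in (tn (n+1))..1, (1:ℝ)) ^ 2) / 2))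
      = 93/128 * (1/4)^n := by
    intro n
    rw [hXone, hXone, hXone]
    have e1 : (1:ℝ) - tn n = 1/2^n := one_sub_tn n
    have e2 : (1:ℝ) - sn n = 5/8 * (1/2^n) := one_sub_sn n
    have e3 : (1:ℝ) - tn (n+1) = 1/2^(n+1) := one_sub_tn (n+1)
    rw [e1, e2, e3]
    have h4 : ((1:ℝ)/2^(n+1)) = (1/2^n)/2 := by
      rw [pow_succ]; ring
    have h5 : ((1:ℝ)/2^n) * (1/2^n) = (1/4)^n := by
      rw [div_mul_div_comm, one_mul, div_pow, one_pow, ← mul_pow]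
      norm_num
    rw [h4]
    nlinarith [h5]
  rw [tsum_congr hterm, tsum_mul_left, tsum_quarter]
  norm_num

theorem stmt12 :
    ∃ αs : ℝ → ℝ, Admissible αs ∧ J0 αs = sInf {v : ℝ | ∃ α, Admissible α ∧ v = J0 α} := by
  refine ⟨fun _ => 1, ⟨measurable_const, fun x => ⟨by norm_num, le_rfl⟩⟩, ?_⟩
  set S := {v : ℝ | ∃ α, Admissible α ∧ v = J0 α} with hS
  have hadm : Admissible (fun _ => (1:ℝ)) := ⟨measurable_const, fun x => ⟨by norm_num, le_rfl⟩⟩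
  have hmem : J0 (fun _ => (1:ℝ)) ∈ S := ⟨fun _ => 1, hadm, rfl⟩
  have hlb : ∀ v ∈ S, -(31/32) ≤ v := by
    rintro v ⟨α, hα, rfl⟩
    exact J0_ge hα
  apply le_antisymm
  · refine le_csInf ⟨_, hmem⟩ (fun v hv => ?_)
    rw [J0_one]
    exact hlb v hv
  · exact csInf_le ⟨-(31/32), hlb⟩ hmem
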